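/- arXiv:1209.1683 — 2 statements merged into one kernel-verified Lean document; each statement's English description precedes it below -/
import Mathlib

section
/- Let f be a nonconstant meromorphic function on ℂ with infinitely many poles. For r > 0 write D_r = {z ∈ ℂ : |z| > r} ∪ {∞}, and let f⁻¹(D_r) ⊆ ℂ denote the union of the set of poles of f and {z : f is analytic at z and |f(z)| > r}. Suppose R₀ > 0 is such that every connected component of f⁻¹(D_{R₀}) is simply connected and is mapped bijectively onto D_{R₀} by f (with poles sent to ∞). Then for every r > R₀ and every R > 0, all but at most finitely many connected components of f⁻¹(D_r) are contained in {z : |z| > R}; that is, the set of connected components of f⁻¹(D_r) that are not contained in {z : |z| > R} is finite. -/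
/-- The preimage under `f` of `D_r = {z : |z| > r} ∪ {∞}`:
the union of the set of poles of `f` (points where `f` is not analytic) and
the set of points where `f` is analytic and `|f z| > r`. -/
def preimageDisk (f : ℂ → ℂ) (r : ℝ) : Set ℂ :=
  {z : ℂ | ¬ AnalyticAt ℂ f z} ∪ {z : ℂ | AnalyticAt ℂ f z ∧ r < ‖f z‖}

/-- The extension of `f` to a map into the Riemann sphere `OnePoint ℂ`,
sending poles to `∞`. -/
noncomputable def sphereExtension (f : ℂ → ℂ) : ℂ → OnePoint ℂ :=
  fun z => open Classical in if AnalyticAt ℂ f z then (f z : OnePoint ℂ) else OnePoint.infty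

/-- The neighborhood `D_r = {z : |z| > r} ∪ {∞}` of `∞` on the Riemann sphere. -/
def sphereDisk (r : ℝ) : Set (OnePoint ℂ) :=
  insert OnePoint.infty ((fun w : ℂ => (w : OnePoint ℂ)) '' {w : ℂ | r < ‖w‖})

section Helpers
open Set Metric Filter Complex Topology


lemma isPreconnected_abs_gt (r : ℝ) (hr : 0 ≤ r) :
    IsPreconnected {w : ℂ | r < ‖w‖} := by
  have h1 : (1 : Cardinal) < Module.rank ℝ ℂ := by
    rw [Complex.rank_real_complex]
    exact_mod_cast one_lt_two
  have hsph : IsConnected (Metric.sphere (0 : ℂ) 1) := isConnected_sphere h1 0 zero_le_one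
  have hIoi : IsConnected (Set.Ioi r) := isConnected_Ioi
  have hprod : IsConnected ((Set.Ioi r) ×ˢ (Metric.sphere (0 : ℂ) 1)) := hIoi.prod hsph
  have hcont : Continuous (fun p : ℝ × ℂ => p.1 • p.2) := continuous_fst.smul continuous_snd
  have himg : (fun p : ℝ × ℂ => p.1 • p.2) '' ((Set.Ioi r) ×ˢ (Metric.sphere (0 : ℂ) 1))
      = {w : ℂ | r < ‖w‖} := by
    ext w
    constructor
    · rintro ⟨⟨s, u⟩, ⟨hs, hu⟩, rfl⟩
      have hu1 : ‖u‖ = 1 := by simpa using hu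
      have hs' : r < s := hs
      simp only [Set.mem_setOf_eq]
      rw [norm_smul, hu1, mul_one, Real.norm_eq_abs, abs_of_pos (lt_of_le_of_lt hr hs')]
      exact hs'
    · intro hw
      have hw' : r < ‖w‖ := by simpa using hw
      have hw0 : w ≠ 0 := by
        intro h; rw [h, norm_zero] at hw'; exact absurd hw' (not_lt.2 hr)
      refine ⟨⟨‖w‖, ‖w‖⁻¹ • w⟩, ⟨hw', ?_⟩, ?_⟩
      · have : ‖w‖ ≠ 0 := by
          simpa using (norm_ne_zero_iff.2 hw0)
        simp [norm_smul, inv_mul_cancel₀ this, abs_of_pos (lt_of_le_of_lt hr hw')]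
      · simp only [smul_smul, mul_inv_cancel₀ (norm_ne_zero_iff.2 hw0), one_smul]
  rw [← himg]
  exact (hprod.image _ hcont.continuousOn).isPreconnected

lemma exists_acc_pt {K : Set ℂ} (hK : IsCompact K) {T : Set ℂ} (hT : T.Infinite)
    (hTK : T ⊆ K) : ∃ z ∈ K, ∀ ε > 0, ∃ t ∈ T, t ≠ z ∧ dist t z < ε := by
  by_contra h
  push_neg at h
  have h' : ∀ z ∈ K, ∃ ε > 0, ∀ t ∈ T, t ≠ z → ε ≤ dist t z := by
    intro z hz
    obtain ⟨ε, hε, hεt⟩ := h z hz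
    exact ⟨ε, hε, fun t ht htz => (hεt t ht htz)⟩
  choose! ε hε hεt using h'
  obtain ⟨s, hsK, hcover⟩ := hK.elim_nhds_subcover (fun z => Metric.ball z (ε z))
    (fun z hz => Metric.ball_mem_nhds z (hε z hz))
  apply hT
  have : T ⊆ (s : Set ℂ) := by
    intro t ht
    obtain ⟨z, hzs, htz⟩ := Set.mem_iUnion₂.1 (hcover (hTK ht))
    have hzK := hsK z hzs
    by_cases htz' : t = z
    · rwa [htz']
    · exact absurd (Metric.mem_ball.1 htz) (not_lt.2 (hεt z hzK t ht htz'))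
  exact Set.Finite.subset s.finite_toSet this


/-- Convert an eventual property on the punctured neighborhood into a metric ball form. -/
lemma punctured_to_ball {z : ℂ} {p : ℂ → Prop} (h : ∀ᶠ w in 𝓝[≠] z, p w) :
    ∃ δ > 0, ∀ w, dist w z < δ → w ≠ z → p w := by
  rw [eventually_nhdsWithin_iff, Metric.eventually_nhds_iff] at h
  obtain ⟨δ, hδ, h⟩ := h
  exact ⟨δ, hδ, fun w hw hwz => h hw hwz⟩

lemma key_lemma (f : ℂ → ℂ) {z : ℂ} (hm : MeromorphicAt f z) {r R₀ : ℝ}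
    (hR₀ : 0 < R₀) (hrR₀ : R₀ < r)
    (hacc : ∀ ε > 0, ∃ t ∈ preimageDisk f r, t ≠ z ∧ dist t z < ε) :
    (∃ δ > 0, ∀ w, dist w z < δ → w ≠ z → AnalyticAt ℂ f w ∧ R₀ < ‖f w‖) ∧
      z ∈ preimageDisk f R₀ := by
  have hr0 : 0 < r := hR₀.trans hrR₀
  obtain ⟨δa, hδa, han⟩ := punctured_to_ball hm.eventually_analyticAt
  -- accumulation points near z are analytic with big values
  have hacc' : ∀ ε > 0, ∃ t, t ≠ z ∧ dist t z < ε ∧ AnalyticAt ℂ f t ∧ r < ‖f t‖ := by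
    intro ε hε
    obtain ⟨t, htP, htz, htd⟩ := hacc (min ε δa) (lt_min hε hδa)
    have htan : AnalyticAt ℂ f t := han t (htd.trans_le (min_le_right _ _)) htz
    have : r < ‖f t‖ := by
      rcases htP with h | h
      · exact absurd htan h
      · exact h.2
    exact ⟨t, htz, htd.trans_le (min_le_left _ _), htan, this⟩
  rcases eq_or_ne (meromorphicOrderAt f z) ⊤ with ho | ho
  · -- order = ⊤ : f vanishes near z, contradiction
    exfalso
    obtain ⟨δ0, hδ0, h0⟩ := punctured_to_ball (meromorphicOrderAt_eq_top_iff.1 ho)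
    obtain ⟨t, htz, htd, -, htr⟩ := hacc' δ0 hδ0
    rw [h0 t htd htz] at htr
    simp only [norm_zero] at htr
    linarith
  · obtain ⟨n, hn⟩ := WithTop.ne_top_iff_exists.1 ho
    obtain ⟨g, hg, hgz, hev⟩ := (meromorphicOrderAt_eq_int_iff hm (n := n)).1 hn.symm
    obtain ⟨δe, hδe, hfe⟩ := punctured_to_ball hev
    rcases le_or_gt 0 n with hn0 | hn0
    · -- nonnegative order : removable singularity with big limit
      set G : ℂ → ℂ := fun w => (w - z) ^ n.toNat * g w with hG
      have hGan : AnalyticAt ℂ G z := (((analyticAt_id).sub analyticAt_const).pow _).mul hg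
      have hfG : ∀ w, dist w z < δe → w ≠ z → f w = G w := by
        intro w hw hwz
        rw [hfe w hw hwz, hG]
        simp only [smul_eq_mul]
        congr 1
        rw [← zpow_natCast, Int.toNat_of_nonneg hn0]
      have hGz : r ≤ ‖G z‖ := by
        by_contra hlt
        push_neg at hlt
        have : ∀ᶠ w in 𝓝 z, ‖G w‖ < r :=
          (continuous_norm.continuousAt.comp hGan.continuousAt).eventually
            (eventually_lt_nhds hlt)
        obtain ⟨δ1, hδ1, h1⟩ := Metric.eventually_nhds_iff.1 this
        obtain ⟨t, htz, htd, -, htr⟩ := hacc' (min δ1 δe) (lt_min hδ1 hδe)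
        rw [hfG t (htd.trans_le (min_le_right _ _)) htz] at htr
        exact absurd (h1 (htd.trans_le (min_le_left _ _))) (not_lt.2 htr.le)
      have hGbig : ∀ᶠ w in 𝓝 z, R₀ < ‖G w‖ :=
        (continuous_norm.continuousAt.comp hGan.continuousAt).eventually
          (eventually_gt_nhds (hrR₀.trans_le hGz))
      obtain ⟨δ1, hδ1, h1⟩ := Metric.eventually_nhds_iff.1 hGbig
      refine ⟨⟨min (min δ1 δe) δa, lt_min (lt_min hδ1 hδe) hδa, ?_⟩, ?_⟩
      · intro w hw hwz
        refine ⟨han w (hw.trans_le (min_le_right _ _)) hwz, ?_⟩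
        rw [hfG w (hw.trans_le ((min_le_left _ _).trans (min_le_right _ _))) hwz]
        exact h1 (hw.trans_le ((min_le_left _ _).trans (min_le_left _ _)))
      · by_cases hz : AnalyticAt ℂ f z
        · right
          refine ⟨hz, ?_⟩
          have hfz : f z = G z := by
            have h1 : Tendsto f (𝓝[≠] z) (𝓝 (f z)) :=
              hz.continuousAt.continuousWithinAt.tendsto
            have hfGev : ∀ᶠ w in 𝓝[≠] z, G w = f w := by
              filter_upwards [hev] with w hw
              rw [hw, hG]
              simp only [smul_eq_mul]
              congr 1
              rw [← zpow_natCast, Int.toNat_of_nonneg hn0]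
            have h2 : Tendsto f (𝓝[≠] z) (𝓝 (G z)) :=
              (hGan.continuousAt.continuousWithinAt.tendsto).congr' hfGev
            exact tendsto_nhds_unique h1 h2
          rw [hfz]; exact hrR₀.trans_le hGz
        · exact Or.inl hz
    · -- negative order : genuine pole
      set m : ℕ := (-n).toNat with hmdef
      have hmz : (m : ℤ) = -n := Int.toNat_of_nonneg (by linarith)
      have hm0 : m ≠ 0 := by
        intro h; rw [h] at hmz; simp at hmz; omega
      have hnm : n = -(m : ℤ) := by omega
      have hgz0 : 0 < ‖g z‖ := by
        simpa using hgz
      set c : ℝ := ‖g z‖ / (2 * R₀) with hc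
      have hc0 : 0 < c := by positivity
      have hg2 : ∀ᶠ w in 𝓝 z, ‖g z‖ / 2 < ‖g w‖ :=
        (continuous_norm.continuousAt.comp hg.continuousAt).eventually
          (eventually_gt_nhds (by simp only [Function.comp_apply]; linarith))
      obtain ⟨δ2, hδ2, h2⟩ := Metric.eventually_nhds_iff.1 hg2
      have hzan : ¬ AnalyticAt ℂ f z := by
        intro hz
        have hnonneg := hz.meromorphicOrderAt_nonneg
        rw [← hn] at hnonneg
        have : (0:ℤ) ≤ n := by exact_mod_cast hnonneg
        omega
      refine ⟨⟨min (min δe δa) (min δ2 (min 1 c)), by positivity, ?_⟩, Or.inl hzan⟩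
      intro w hw hwz
      have hwδe : dist w z < δe := lt_of_lt_of_le hw ((min_le_left _ _).trans (min_le_left _ _))
      have hwδa : dist w z < δa := lt_of_lt_of_le hw ((min_le_left _ _).trans (min_le_right _ _))
      have hwδ2 : dist w z < δ2 := lt_of_lt_of_le hw ((min_le_right _ _).trans (min_le_left _ _))
      have hw1 : dist w z < 1 :=
        lt_of_lt_of_le hw ((min_le_right _ _).trans ((min_le_right _ _).trans (min_le_left _ _)))
      have hwc : dist w z < c :=
        lt_of_lt_of_le hw ((min_le_right _ _).trans ((min_le_right _ _).trans (min_le_right _ _)))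
      refine ⟨han w hwδa hwz, ?_⟩
      set x : ℝ := ‖w - z‖ with hx
      have hx0 : 0 < x := by
        rw [hx, norm_pos_iff]
        exact sub_ne_zero.2 hwz
      have hxd : x = dist w z := (Complex.dist_eq w z).symm
      have hxm : x ^ m ≤ x := pow_le_of_le_one hx0.le (by rw [hxd]; exact hw1.le) hm0
      have hxmc : x ^ m < c := lt_of_le_of_lt hxm (by rw [hxd]; exact hwc)
      have habs : ‖f w‖ = ‖g w‖ / x ^ m := by
        rw [hfe w hwδe hwz, smul_eq_mul, norm_mul, norm_zpow, hnm, zpow_neg, zpow_natCast,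
          inv_mul_eq_div]
      rw [habs]
      have hR0eq : R₀ = (‖g z‖ / 2) / c := by
        rw [hc]; field_simp
      rw [hR0eq]
      have hgw : ‖g z‖ / 2 < ‖g w‖ := h2 hwδ2
      calc ‖g z‖ / 2 / c < ‖g w‖ / c := by gcongr
        _ ≤ ‖g w‖ / x ^ m := by
            have h0 : (0:ℝ) ≤ ‖g w‖ := norm_nonneg _
            have hp : 0 < x ^ m := pow_pos hx0 m
            gcongr

end Helpers

open Set Metric Filter Complex Topology in
/-- Lemma 2.1: if `f` is a nonconstant meromorphic function on `ℂ` with infinitely many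
poles, `∞` is not a singular value of `f⁻¹` over `D_{R₀}` (every component of
`f⁻¹(D_{R₀})` is simply connected and mapped bijectively onto `D_{R₀}`), then for every
`r > R₀` and every `R > 0`, all but finitely many components of `f⁻¹(D_r)` lie in
`{z : |z| > R}`. -/
theorem all_but_finitely_many_components_far
    (f : ℂ → ℂ) (hf : MeromorphicOn f Set.univ)
    (hnc : ∃ a b : ℂ, f a ≠ f b)
    (hpoles : {z : ℂ | ¬ AnalyticAt ℂ f z}.Infinite)
    (R₀ : ℝ) (hR₀ : 0 < R₀)
    (hcomp : ∀ z ∈ preimageDisk f R₀,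
      SimplyConnectedSpace ↥(connectedComponentIn (preimageDisk f R₀) z) ∧
      Set.BijOn (sphereExtension f) (connectedComponentIn (preimageDisk f R₀) z)
        (sphereDisk R₀)) :
    ∀ r > R₀, ∀ R > 0,
      {C : Set ℂ | (∃ z ∈ preimageDisk f r, C = connectedComponentIn (preimageDisk f r) z) ∧
        ¬ C ⊆ {z : ℂ | R < ‖z‖}}.Finite := by
  intro r hr R hR
  classical
  by_contra hfin
  have hinf : {C : Set ℂ | (∃ z ∈ preimageDisk f r, C = connectedComponentIn (preimageDisk f r) z) ∧
      ¬ C ⊆ {z : ℂ | R < ‖z‖}}.Infinite := hfin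
  set S := {C : Set ℂ | (∃ z ∈ preimageDisk f r, C = connectedComponentIn (preimageDisk f r) z) ∧
      ¬ C ⊆ {z : ℂ | R < ‖z‖}} with hS
  set P := preimageDisk f r with hP
  set Q := preimageDisk f R₀ with hQ
  have hr0 : 0 < r := hR₀.trans hr
  -- pick a point of small modulus in each component
  have hex : ∀ C ∈ S, ∃ t, t ∈ C ∧ ‖t‖ ≤ R := by
    intro C hC
    obtain ⟨-, hC2⟩ := hC
    rw [Set.not_subset] at hC2
    obtain ⟨t, htC, ht⟩ := hC2
    exact ⟨t, htC, not_lt.1 ht⟩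
  set F : Set ℂ → ℂ := fun C => if h : ∃ t, t ∈ C ∧ ‖t‖ ≤ R then h.choose else 0
    with hF
  have hFmem : ∀ C ∈ S, F C ∈ C ∧ ‖F C‖ ≤ R := by
    intro C hC
    rw [hF]
    simp only
    rw [dif_pos (hex C hC)]
    exact (hex C hC).choose_spec
  have hcompeq : ∀ C ∈ S, ∀ t ∈ C, C = connectedComponentIn P t := by
    intro C hC t ht
    obtain ⟨⟨z0, hz0P, hz0⟩, -⟩ := hC
    rw [hz0] at ht ⊢
    exact connectedComponentIn_eq ht
  have hinj : Set.InjOn F S := by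
    intro C hC C' hC' hEq
    rw [hcompeq C hC _ (hFmem C hC).1, hcompeq C' hC' _ (hFmem C' hC').1, hEq]
  set T := F '' S with hT
  have hTinf : T.Infinite := (Set.infinite_image_iff hinj).2 hinf
  have hTK : T ⊆ Metric.closedBall 0 R := by
    rintro t ⟨C, hC, rfl⟩
    rw [Metric.mem_closedBall, Complex.dist_eq, sub_zero]
    exact (hFmem C hC).2
  have hTP : T ⊆ P := by
    rintro t ⟨C, hC, rfl⟩
    have hCsub : C ⊆ P := by
      rw [hcompeq C hC _ (hFmem C hC).1]
      exact connectedComponentIn_subset _ _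
    exact hCsub (hFmem C hC).1
  obtain ⟨z, hzK, hzacc⟩ := exists_acc_pt (isCompact_closedBall 0 R) hTinf hTK
  have haccP : ∀ ε > 0, ∃ t ∈ P, t ≠ z ∧ dist t z < ε := by
    intro ε hε
    obtain ⟨t, htT, h1, h2⟩ := hzacc ε hε
    exact ⟨t, hTP htT, h1, h2⟩
  obtain ⟨⟨δ, hδ, hδball⟩, hzQ⟩ := key_lemma f (hf z (Set.mem_univ z)) hR₀ hr haccP
  set U := connectedComponentIn Q z with hU
  have hBQ : Metric.ball z δ ⊆ Q := by
    intro w hw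
    by_cases hwz : w = z
    · rw [hwz]; exact hzQ
    · obtain ⟨h1, h2⟩ := hδball w (Metric.mem_ball.1 hw) hwz
      exact Or.inr ⟨h1, h2⟩
  have hBU : Metric.ball z δ ⊆ U :=
    (convex_ball z δ).isPreconnected.subset_connectedComponentIn (Metric.mem_ball_self hδ) hBQ
  have hbij := (hcomp z hzQ).2
  set V := U ∩ {w | AnalyticAt ℂ f w} with hV
  have hUQ : U ⊆ Q := connectedComponentIn_subset Q z
  have hVval : ∀ w ∈ V, R₀ < ‖f w‖ := by
    rintro w ⟨hwU, hwa⟩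
    rcases hUQ hwU with h | h
    · exact absurd hwa h
    · exact h.2
  have hφ : ∀ w, AnalyticAt ℂ f w → sphereExtension f w = (f w : OnePoint ℂ) :=
    fun w hw => if_pos hw
  have hφ' : ∀ w, ¬ AnalyticAt ℂ f w → sphereExtension f w = OnePoint.infty :=
    fun w hw => if_neg hw
  have hinjV : Set.InjOn f V := by
    rintro w ⟨hwU, hwa⟩ w' ⟨hw'U, hw'a⟩ hww
    apply hbij.injOn hwU hw'U
    rw [hφ w hwa, hφ w' hw'a, hww]
  have hsurjV : ∀ c : ℂ, R₀ < ‖c‖ → ∃ w, w ∈ V ∧ f w = c := by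
    intro c hc
    have hmem : (c : OnePoint ℂ) ∈ sphereDisk R₀ :=
      Set.mem_insert_iff.2 (Or.inr ⟨c, hc, rfl⟩)
    obtain ⟨w, hwU, hwφ⟩ := hbij.surjOn hmem
    have hwa : AnalyticAt ℂ f w := by
      by_contra hwa
      rw [hφ' w hwa] at hwφ
      exact OnePoint.infty_ne_coe c hwφ
    refine ⟨w, ⟨hwU, hwa⟩, ?_⟩
    rw [hφ w hwa] at hwφ
    exact OnePoint.coe_injective hwφ
  have hVopen : IsOpen V := by
    rw [Metric.isOpen_iff]
    rintro w ⟨hwU, hwa⟩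
    have hval := hVval w ⟨hwU, hwa⟩
    have h1 : ∀ᶠ u in 𝓝 w, AnalyticAt ℂ f u := hwa.eventually_analyticAt
    have h2 : ∀ᶠ u in 𝓝 w, R₀ < ‖f u‖ :=
      (continuous_norm.continuousAt.comp hwa.continuousAt).eventually
        (eventually_gt_nhds hval)
    obtain ⟨ε, hε, hb⟩ := Metric.eventually_nhds_iff.1 (h1.and h2)
    have hballQ : Metric.ball w ε ⊆ Q := by
      intro v hv
      exact Or.inr ⟨(hb (Metric.mem_ball.1 hv)).1, (hb (Metric.mem_ball.1 hv)).2⟩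
    have hUw : U = connectedComponentIn Q w := connectedComponentIn_eq hwU
    have hballU : Metric.ball w ε ⊆ U := by
      rw [hUw]
      exact (convex_ball w ε).isPreconnected.subset_connectedComponentIn
        (Metric.mem_ball_self hε) hballQ
    exact ⟨ε, hε, fun u hu => ⟨hballU hu, (hb (Metric.mem_ball.1 hu)).1⟩⟩
  set ψ : ℂ → ℂ := fun c => if h : ∃ w, w ∈ V ∧ f w = c then h.choose else 0 with hψdef
  have hψ : ∀ c : ℂ, R₀ < ‖c‖ → ψ c ∈ V ∧ f (ψ c) = c := by
    intro c hc
    rw [hψdef]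
    simp only
    rw [dif_pos (hsurjV c hc)]
    exact (hsurjV c hc).choose_spec
  have hψf : ∀ w ∈ V, ψ (f w) = w := by
    intro w hw
    have h1 := hψ (f w) (hVval w hw)
    exact hinjV h1.1 hw h1.2
  have hopenmap : ∀ O : Set ℂ, IsOpen O → O ⊆ V → IsOpen (f '' O) := by
    intro O hO hOV
    rw [isOpen_iff_mem_nhds]
    rintro y ⟨o, hoO, rfl⟩
    have hoa : AnalyticAt ℂ f o := (hOV hoO).2
    rcases hoa.eventually_constant_or_nhds_le_map_nhds with hconst | hle
    · exfalso
      obtain ⟨ε1, hε1, hb1⟩ := Metric.eventually_nhds_iff.1 hconst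
      obtain ⟨ε2, hε2, hb2⟩ := Metric.isOpen_iff.1 hO o hoO
      set ε := min ε1 ε2 with hε
      have hεpos : 0 < ε := lt_min hε1 hε2
      set u : ℂ := o + ((ε / 2 : ℝ) : ℂ) with hu
      have hdu : dist u o = ε / 2 := by
        rw [hu, dist_eq_norm, add_sub_cancel_left, Complex.norm_real, Real.norm_eq_abs,
          abs_of_pos (by positivity)]
      have huo : u ≠ o := by
        rw [hu]
        intro h
        have : ((ε / 2 : ℝ) : ℂ) = 0 := by
          have := congrArg (fun x => x - o) h
          simpa [add_sub_cancel_left] using this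
        rw [Complex.ofReal_eq_zero] at this
        linarith
      have hd1 : dist u o < ε1 := by
        rw [hdu]
        have : ε ≤ ε1 := min_le_left _ _
        linarith
      have hd2 : dist u o < ε2 := by
        rw [hdu]
        have : ε ≤ ε2 := min_le_right _ _
        linarith
      have huO : u ∈ O := hb2 (Metric.mem_ball.2 hd2)
      have hfu : f u = f o := hb1 hd1
      exact huo (hinjV (hOV huO) (hOV hoO) hfu)
    · exact hle (Filter.image_mem_map (hO.mem_nhds hoO))
  have hcontψ : ContinuousOn ψ {c : ℂ | R₀ < ‖c‖} := by
    rw [_root_.continuousOn_iff]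
    intro c hc t ht hψt
    refine ⟨f '' (t ∩ V), hopenmap _ (ht.inter hVopen) Set.inter_subset_right, ?_, ?_⟩
    · exact ⟨ψ c, ⟨hψt, (hψ c hc).1⟩, (hψ c hc).2⟩
    · rintro c' ⟨⟨o, ⟨hot, hoV⟩, rfl⟩, -⟩
      show ψ (f o) ∈ t
      rw [hψf o hoV]
      exact hot
  set A := ψ '' {c : ℂ | r < ‖c‖} with hA
  have hsubval : {c : ℂ | r < ‖c‖} ⊆ {c : ℂ | R₀ < ‖c‖} :=
    fun c hc => lt_trans hr hc
  have hAconn : IsPreconnected A :=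
    (isPreconnected_abs_gt r hr0.le).image ψ (hcontψ.mono hsubval)
  have hAP : A ⊆ P := by
    rintro a ⟨c, hc, rfl⟩
    have h1 := hψ c (hsubval hc)
    exact Or.inr ⟨h1.1.2, by rw [h1.2]; exact hc⟩
  obtain ⟨t₁, ht₁T, ht₁z, ht₁d⟩ := hzacc δ hδ
  obtain ⟨t₂, ht₂T, ht₂z, ht₂d⟩ := hzacc (min δ (dist t₁ z)) (lt_min hδ (dist_pos.2 ht₁z))
  have ht₂δ : dist t₂ z < δ := lt_of_lt_of_le ht₂d (min_le_left _ _)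
  have hne : t₂ ≠ t₁ := by
    intro h
    rw [h] at ht₂d
    exact absurd (lt_of_lt_of_le ht₂d (min_le_right _ _)) (lt_irrefl _)
  have hmemA : ∀ t, t ∈ T → t ≠ z → dist t z < δ → t ∈ A := by
    intro t htT htz htd
    obtain ⟨hta, htR₀⟩ := hδball t htd htz
    have htr : r < ‖f t‖ := by
      rcases hTP htT with h | h
      · exact absurd hta h
      · exact h.2
    have htV : t ∈ V := ⟨hBU (Metric.mem_ball.2 htd), hta⟩
    exact ⟨f t, htr, hψf t htV⟩
  have h1A := hmemA t₁ ht₁T ht₁z ht₁d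
  have h2A := hmemA t₂ ht₂T ht₂z ht₂δ
  have hsub : A ⊆ connectedComponentIn P t₁ :=
    hAconn.subset_connectedComponentIn h1A hAP
  obtain ⟨C₁, hC₁, hFC₁⟩ := ht₁T
  obtain ⟨C₂, hC₂, hFC₂⟩ := ht₂T
  have hCeq : C₁ = C₂ := by
    have e1 : C₁ = connectedComponentIn P t₁ := by
      rw [← hFC₁]; exact hcompeq C₁ hC₁ _ (hFmem C₁ hC₁).1
    have e2 : C₂ = connectedComponentIn P t₂ := by
      rw [← hFC₂]; exact hcompeq C₂ hC₂ _ (hFmem C₂ hC₂).1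
    rw [e1, e2]
    exact connectedComponentIn_eq (hsub h2A)
  exact hne (by rw [← hFC₁, ← hFC₂, hCeq])
end

section
/- Let f : ℂ → ℂ be an entire function (differentiable on all of ℂ), let t > 0 be real, let p, q ≥ 1 be integers, put n = p + q, and let w ∈ ℂ with a = f^p(w) (the p-th iterate of f at w). Assume the spherical derivative (f^p)^×(w) is nonzero. Then, with sums taken in [0,∞] (using the convention 1/0 = ∞), one has ∑_{z : f^q(z) = w} ((f^q)^×(z))^{−t} ≤ ((f^p)^×(w))^t · ∑_{z : f^n(z) = a} ((f^n)^×(z))^{−t}. -/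
open scoped ENNReal

/-- The spherical derivative `h^×(z) = |h′(z)|·(1+|z|²)/(1+|h(z)|²)` of an entire
function `h` at `z`. -/
noncomputable def sphDeriv (h : ℂ → ℂ) (z : ℂ) : ℝ :=
  ‖deriv h z‖ * (1 + ‖z‖ ^ 2) / (1 + ‖h z‖ ^ 2)

/-- The Perron–Frobenius–Ruelle fiber sum `∑_{z : f^k(z) = b} ((f^k)^×(z))^{−t}`,
taken in `[0,∞]` with the convention `0^(−t) = ∞` for `t > 0`. -/
noncomputable def fiberSum (f : ℂ → ℂ) (k : ℕ) (t : ℝ) (b : ℂ) : ℝ≥0∞ :=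
  ∑' z : {z : ℂ // f^[k] z = b}, (ENNReal.ofReal (sphDeriv f^[k] z)) ^ (-t)

lemma sphDeriv_nonneg (h : ℂ → ℂ) (z : ℂ) : 0 ≤ sphDeriv h z := by
  unfold sphDeriv
  positivity

lemma sphDeriv_comp (g h : ℂ → ℂ) (hg : Differentiable ℂ g) (hh : Differentiable ℂ h) (z : ℂ) :
    sphDeriv (g ∘ h) z = sphDeriv g (h z) * sphDeriv h z := by
  unfold sphDeriv
  rw [deriv_comp z (hg _) (hh _), norm_mul, Function.comp_apply]
  have h1 : (1 : ℝ) + ‖h z‖ ^ 2 ≠ 0 := by positivity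
  have h2 : (1 : ℝ) + ‖g (h z)‖ ^ 2 ≠ 0 := by positivity
  field_simp

/-- Inequality (3.9) of Lemma 3.5(ii), for entire `f`: if `n = p + q` and `a = f^p(w)`,
then `∑_{f^q(z)=w} ((f^q)^×(z))^{−t} ≤ ((f^p)^×(w))^t · ∑_{f^n(z)=a} ((f^n)^×(z))^{−t}`. -/
theorem fiberSum_le_mul_fiberSum (f : ℂ → ℂ) (hf : Differentiable ℂ f)
    (t : ℝ) (ht : 0 < t) (p q n : ℕ) (hp : 1 ≤ p) (hq : 1 ≤ q) (hn : n = p + q)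
    (w a : ℂ) (ha : a = f^[p] w) (hw : sphDeriv f^[p] w ≠ 0) :
    fiberSum f q t w ≤ (ENNReal.ofReal (sphDeriv f^[p] w)) ^ t * fiberSum f n t a := by
  set c : ℝ≥0∞ := ENNReal.ofReal (sphDeriv f^[p] w) with hc
  have hc0 : c ≠ 0 := by
    simp [hc, ENNReal.ofReal_eq_zero, not_le,
      lt_of_le_of_ne (sphDeriv_nonneg _ _) (Ne.symm hw)]
  have hctop : c ≠ ⊤ := ENNReal.ofReal_ne_top
  -- key pointwise identity on the fiber of f^[q] over w
  have key : ∀ z : ℂ, f^[q] z = w →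
      (ENNReal.ofReal (sphDeriv f^[q] z)) ^ (-t)
        = c ^ t * (ENNReal.ofReal (sphDeriv f^[n] z)) ^ (-t) := by
    intro z hz
    have hchain : sphDeriv f^[n] z = sphDeriv f^[p] w * sphDeriv f^[q] z := by
      have : f^[n] = f^[p] ∘ f^[q] := by
        rw [hn]; ext x; exact Function.iterate_add_apply f p q x
      rw [this, sphDeriv_comp _ _ (hf.iterate p) (hf.iterate q), hz]
    rw [hchain, ENNReal.ofReal_mul (sphDeriv_nonneg _ _),
      ENNReal.mul_rpow_of_ne_top hctop ENNReal.ofReal_ne_top, ← mul_assoc,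
      ← ENNReal.rpow_add _ _ hc0 hctop]
    simp
  -- rewrite the left sum and compare via the injection of fibers
  calc fiberSum f q t w
      = ∑' z : {z : ℂ // f^[q] z = w},
          c ^ t * (ENNReal.ofReal (sphDeriv f^[n] z)) ^ (-t) := by
        unfold fiberSum
        exact tsum_congr fun z => key z z.2
    _ = c ^ t * ∑' z : {z : ℂ // f^[q] z = w},
          (ENNReal.ofReal (sphDeriv f^[n] z)) ^ (-t) := ENNReal.tsum_mul_left
    _ ≤ c ^ t * fiberSum f n t a := by
        refine mul_le_mul_right ?_ _
        unfold fiberSum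
        have hmap : ∀ z : {z : ℂ // f^[q] z = w}, f^[n] (z : ℂ) = a := by
          intro z
          rw [hn, Function.iterate_add_apply, z.2, ha]
        refine ENNReal.summable.tsum_le_tsum_of_inj (fun z => ⟨(z : ℂ), hmap z⟩)
          (fun z₁ z₂ h => Subtype.ext (by simpa using congrArg Subtype.val h))
          (fun _ _ => zero_le) (fun z => le_rfl) ENNReal.summable
end
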